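/- Given A ⊆ ℕ, define B_n = {m ∈ ℕ : (m)_n = χ_A(n)} where (m)_n is the n-th binary digit of m and χ_A is the characteristic function of A. Then each finite intersection A_m = ⋂_{n≤m} B_n is infinite, and for any infinite C ⊆ ℕ with C ⊆_Fin B_n for all n, one has A = {n ∈ ℕ : ∃m ∀k ∈ C, k > m → (k)_n = 1}. -/

import Mathlib

private lemma stmt4_tb_low {n N : ℕ} (hn : n < N) (x : ℕ) :
    x.testBit n = (x % 2 ^ N).testBit n := by
  rw [Nat.testBit_mod_two_pow]
  simp [hn]

private lemma stmt4_base (A : Set ℕ) (m : ℕ) :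
    ∃ b < 2 ^ (m + 1), ∀ n ≤ m, (b.testBit n = true ↔ n ∈ A) := by
  classical
  induction m with
  | zero =>
    refine ⟨if 0 ∈ A then 1 else 0, ?_, ?_⟩
    · split <;> norm_num
    · intro n hn
      interval_cases n
      split <;> simp_all
  | succ m ih =>
    obtain ⟨b, hb, hbit⟩ := ih
    refine ⟨b + if m + 1 ∈ A then 2 ^ (m + 1) else 0, ?_, ?_⟩
    · have : 2 ^ (m + 1) + 2 ^ (m + 1) = 2 ^ (m + 2) := by ring
      split <;> omega
    · intro n hn
      rcases Nat.lt_or_ge n (m + 1) with h | h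
      · rw [stmt4_tb_low h (b + _)]
        have hmod : (b + if m + 1 ∈ A then 2 ^ (m + 1) else 0) % 2 ^ (m + 1) = b := by
          split
          · simp [Nat.add_mul_mod_self_left, Nat.mod_eq_of_lt hb,
              Nat.add_mod_right]
          · simp [Nat.mod_eq_of_lt hb]
        rw [hmod]
        exact hbit n (by omega)
      · have hn' : n = m + 1 := by omega
        subst hn'
        rw [Nat.testBit_eq_decide_div_mod_eq]
        have hdiv : (b + if m + 1 ∈ A then 2 ^ (m + 1) else 0) / 2 ^ (m + 1)
            = if m + 1 ∈ A then 1 else 0 := by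
          split
          · rw [Nat.add_div_right _ (by positivity), Nat.div_eq_of_lt hb]
          · simp [Nat.div_eq_of_lt hb]
        rw [hdiv]
        split <;> simp_all

theorem stmt4 (A : Set ℕ) :
    (∀ m : ℕ, {k : ℕ | ∀ n ≤ m, (k.testBit n = true ↔ n ∈ A)}.Infinite) ∧
    ∀ C : Set ℕ, C.Infinite →
      (∀ n : ℕ, (C \ {m : ℕ | m.testBit n = true ↔ n ∈ A}).Finite) →
      A = {n : ℕ | ∃ m : ℕ, ∀ k ∈ C, k > m → k.testBit n = true} := by
  constructor
  · intro m
    obtain ⟨b, hb, hbit⟩ := stmt4_base A m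
    apply Set.infinite_of_injective_forall_mem (f := fun j : ℕ => b + j * 2 ^ (m + 1))
    · intro i j h
      have hp : 0 < 2 ^ (m + 1) := by positivity
      simp only at h
      exact Nat.eq_of_mul_eq_mul_right hp (by omega)
    · intro j n hn
      have : (b + j * 2 ^ (m + 1)).testBit n = b.testBit n := by
        rw [stmt4_tb_low (show n < m + 1 by omega) (b + j * 2 ^ (m + 1)),
          Nat.add_mul_mod_self_right, Nat.mod_eq_of_lt hb,
          stmt4_tb_low (show n < m + 1 by omega) b]
      rw [this]
      exact hbit n hn
  · intro C hC hfin
    ext n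
    simp only [Set.mem_setOf_eq]
    constructor
    · intro hnA
      obtain ⟨m, hm⟩ := (hfin n).bddAbove
      refine ⟨m, fun k hk hkm => ?_⟩
      by_contra hbit
      have hk' : k ∈ C \ {m : ℕ | m.testBit n = true ↔ n ∈ A} := by
        refine ⟨hk, fun h => ?_⟩
        simp only [Set.mem_setOf_eq] at h
        exact hbit (h.mpr hnA)
      exact absurd (hm hk') (by omega)
    · rintro ⟨m, hm⟩
      by_contra hnA
      obtain ⟨m', hm'⟩ := (hfin n).bddAbove
      obtain ⟨k, hkC, hk⟩ := hC.exists_gt (max m m')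
      have := hm k hkC (by omega)
      have hk2 : k ∈ {m : ℕ | m.testBit n = true ↔ n ∈ A} := by
        by_contra h
        have : k ∈ C \ _ := ⟨hkC, h⟩
        have := hm' this
        omega
      exact hnA (hk2.mp this)
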